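/- Correctness of the forward-secure TBIDS from a HIBS: if the underlying (1 + ⌈log₂ n⌉)-level HIBS is correct, then for every epoch i ∈ [n] obtained by i successive Update operations from the root key (via the DFEval traversal), every identity id, and every message m, the key sk_{i,id} = HIBS.Del(sk^{(i)}, (binid(i), id)) delegated from the current leaf key sk^{(i)} satisfies Verify(pk, i, id, m, Sign(sk_{i,id}, m)) = 1, because the DFEval traversal yields at step i precisely a correctly delegated HIBS key for identity binid(i). -/

import Mathlib

/-- An abstract hierarchical identity-based signature scheme with explicit
randomness `R`.  `validKey pk id sk` expresses that `sk` is a key for the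
hierarchical identity `id` obtained by honest (iterated) delegation from the
master key. -/
structure HIBS (PK SK Id M Sig R : Type) where
  del : SK → List Id → R → SK
  sign : SK → M → R → Sig
  verify : PK → List Id → M → Sig → Bool
  validKey : PK → List Id → SK → Prop

/-- The `d`-bit binary encoding (most significant bit first) of the index of a
leaf of the complete binary tree of depth `d`; this is `binid(i)`. -/
def leafEnc (d i : ℕ) : List Bool := (List.range d).map fun j => i.testBit (d - 1 - j)


lemma leafEnc_length (d i : ℕ) : (leafEnc d i).length = d := by simp [leafEnc]

lemma leafEnc_succ (d i : ℕ) : leafEnc (d+1) i = i.testBit d :: leafEnc d i := by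
  simp only [leafEnc, List.range_succ_eq_map, List.map_cons, List.map_map, Function.comp]
  congr 1
  apply List.map_congr_left; intro a _
  simp only [Function.comp_apply]
  congr 1; omega

lemma leafEnc_mod (d i : ℕ) : leafEnc d (i % 2^d) = leafEnc d i := by
  unfold leafEnc
  apply List.map_congr_left
  intro j hj
  simp only [List.mem_range] at hj
  rw [Nat.testBit_mod_two_pow]
  simp [show d - 1 - j < d by omega]

lemma leafEnc_zero (d : ℕ) : leafEnc d 0 = List.replicate d false := by
  induction d with
  | zero => simp [leafEnc]
  | succ n ih => rw [leafEnc_succ, ih, Nat.zero_testBit, List.replicate_succ]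

lemma leafEnc_ones (d : ℕ) : leafEnc d (2^d - 1) = List.replicate d true := by
  induction d with
  | zero => simp [leafEnc]
  | succ n ih =>
    rw [leafEnc_succ]
    have h1 : (2^(n+1) - 1).testBit n = true := by
      rw [Nat.testBit_two_pow_sub_one]; simp
    have h2 : leafEnc n (2^(n+1) - 1) = leafEnc n (2^n - 1) := by
      rw [← leafEnc_mod]
      congr 1
      have hp : 0 < 2^n := Nat.two_pow_pos n
      have he : 2^(n+1) - 1 = 2^n + (2^n - 1) := by
        have : 2^(n+1) = 2 * 2^n := by ring
        omega
      rw [he, Nat.add_mod_left, Nat.mod_eq_of_lt (by omega)]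
    rw [h1, h2, ih, List.replicate_succ]

/-- Binary increment on fixed-width big-endian encodings. -/
lemma leafEnc_inc (d i : ℕ) (h : i + 1 < 2^d) :
    ∃ p j, leafEnc d i = p ++ false :: List.replicate j true ∧
      leafEnc d (i+1) = p ++ true :: List.replicate j false := by
  induction d generalizing i with
  | zero => simp at h
  | succ n ih =>
    have hp : 0 < 2^n := Nat.two_pow_pos n
    have hlt : i % 2^n < 2^n := Nat.mod_lt _ hp
    by_cases hc : i % 2^n + 1 < 2^n
    · obtain ⟨p', j', h1, h2⟩ := ih (i % 2^n) hc
      refine ⟨i.testBit n :: p', j', ?_, ?_⟩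
      · rw [leafEnc_succ, ← leafEnc_mod n i, h1]; rfl
      · have hd := Nat.div_add_mod i (2^n)
        have hmod : (i+1) % 2^n = i % 2^n + 1 := by
          rw [show i + 1 = (i % 2^n + 1) + 2^n * (i / 2^n) by omega]
          rw [Nat.add_mul_mod_self_left, Nat.mod_eq_of_lt hc]
        have htb : (i+1).testBit n = i.testBit n := by
          have hdiv : (i+1) / 2^n = i / 2^n := by
            have : i + 1 = 2^n * (i / 2^n) + (i % 2^n + 1) := by omega
            rw [this, Nat.mul_add_div hp, Nat.div_eq_of_lt hc, Nat.add_zero]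
          simp [Nat.testBit_eq_decide_div_mod_eq, hdiv]
        rw [leafEnc_succ, ← leafEnc_mod n (i+1), hmod, h2, htb]; rfl
    · -- low n bits all ones: i % 2^n = 2^n - 1 hence i = 2^n - 1
      have hmod : i % 2^n = 2^n - 1 := by omega
      have hd := Nat.div_add_mod i (2^n)
      have h2n : 2^(n+1) = 2 * 2^n := by ring
      have hlt2 : i / 2^n < 2 := Nat.div_lt_of_lt_mul (by omega)
      have hq : i / 2^n = 0 := by
        rcases (Nat.le_of_lt_succ hlt2).lt_or_eq with h0 | h1
        · exact Nat.lt_one_iff.mp h0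
        · rw [h1, Nat.mul_one] at hd; omega
      rw [hq, Nat.mul_zero] at hd
      have hieq : i = 2^n - 1 := by omega
      refine ⟨[], n, ?_, ?_⟩
      · rw [hieq, leafEnc_succ, leafEnc_ones]
        have : (2^n - 1).testBit n = false := by
          rw [Nat.testBit_two_pow_sub_one]; simp
        rw [this]; rfl
      · have : i + 1 = 2^n := by omega
        rw [this, leafEnc_succ, ← leafEnc_mod n (2^n), Nat.mod_self, leafEnc_zero,
          Nat.testBit_two_pow_self]
        rfl

/-- The node labels of the DFEval stack after the traversal has reached the
leaf given by the argument bit string (deepest right sibling on top). -/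
def goS : List Bool → List Bool → List (List Bool)
  | _, [] => []
  | pre, false :: rest => goS (pre ++ [false]) rest ++ [pre ++ [true]]
  | pre, true :: rest => goS (pre ++ [true]) rest

lemma goS_append (pre a b : List Bool) :
    goS pre (a ++ b) = goS (pre ++ a) b ++ goS pre a := by
  induction a generalizing pre with
  | nil => simp [goS]
  | cons c rest ih =>
    cases c <;> simp [goS, ih, List.append_assoc]

lemma goS_replicate_true (pre : List Bool) (j : ℕ) :
    goS pre (List.replicate j true) = [] := by
  induction j generalizing pre with
  | zero => simp [goS]
  | succ n ih => simp [List.replicate_succ, goS, ih]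

variable {PK SK Id M Sig R BId : Type}

/-- The while-loop of DFEval on node/key pairs: while the current node `w` is
internal, delegate keys for both children (using per-node randomness `rnd`),
push the right child's key onto the stack, and descend to the left child. -/
def dfDescendK (H : HIBS PK SK Id M Sig R) (eb : Bool → Id) (rnd : List Bool → R)
    (d : ℕ) (w : List Bool) (k : SK) (s : List (List Bool × SK)) :
    (List Bool × SK) × List (List Bool × SK) :=
  if h : w.length < d then
    dfDescendK H eb rnd d (w ++ [false])
      (H.del k ((w ++ [false]).map eb) (rnd (w ++ [false])))
      ((w ++ [true], H.del k ((w ++ [true]).map eb) (rnd (w ++ [true]))) :: s)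
  else ((w, k), s)
termination_by d - w.length
decreasing_by simp [List.length_append]; omega

/-- DFEval: pop the topmost node/key pair from the stack and run the descent
loop (the empty-stack case never occurs in the construction). -/
def dfEvalK (H : HIBS PK SK Id M Sig R) (eb : Bool → Id) (rnd : List Bool → R)
    (d : ℕ) (skε : SK) (s : List (List Bool × SK)) :
    (List Bool × SK) × List (List Bool × SK) :=
  match s with
  | [] => (([], skε), [])
  | (w, k) :: rest => dfDescendK H eb rnd d w k rest

/-- The state after `t` `Update` operations (DFEval invocations) starting from
the stack holding only the master key at the root; the first component is the
leaf node and leaf key produced by the last invocation. -/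
def dfRunK (H : HIBS PK SK Id M Sig R) (eb : Bool → Id) (rnd : List Bool → R)
    (d : ℕ) (skε : SK) : ℕ → (List Bool × SK) × List (List Bool × SK)
  | 0 => (([], skε), [([], skε)])
  | t + 1 => dfEvalK H eb rnd d skε (dfRunK H eb rnd d skε t).2

section Spec

variable (H : HIBS PK SK Id M Sig R) (eb : Bool → Id) (rnd : List Bool → R)
  (d : ℕ) (pk : PK)

lemma dfDescendK_spec
    (hdel : ∀ (p : PK) (id id' : List Id) (sk : SK) (r : R),
      H.validKey p id sk → id <+: id' → H.validKey p id' (H.del sk id' r)) :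
    ∀ (n : ℕ) (w : List Bool) (k : SK) (s : List (List Bool × SK)),
    d - w.length = n → w.length ≤ d →
    H.validKey pk (w.map eb) k →
    (∀ p ∈ s, H.validKey pk (p.1.map eb) p.2) →
    (dfDescendK H eb rnd d w k s).1.1 = w ++ List.replicate (d - w.length) false ∧
    H.validKey pk (((dfDescendK H eb rnd d w k s).1.1).map eb)
      (dfDescendK H eb rnd d w k s).1.2 ∧
    ((dfDescendK H eb rnd d w k s).2).map Prod.fst =
      goS w (List.replicate (d - w.length) false) ++ s.map Prod.fst ∧
    ∀ p ∈ (dfDescendK H eb rnd d w k s).2, H.validKey pk (p.1.map eb) p.2 := by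
  intro n
  induction n with
  | zero =>
    intro w k s hn hle hk hs
    have hlen : w.length = d := by omega
    rw [dfDescendK]
    rw [dif_neg (by omega)]
    simp only [hn, List.replicate_zero, List.append_nil, goS, List.nil_append]
    exact ⟨by simp, hk, by simp, hs⟩
  | succ n ih =>
    intro w k s hn hle hk hs
    have hlt : w.length < d := by omega
    rw [dfDescendK, dif_pos hlt]
    have hkL : H.validKey pk ((w ++ [false]).map eb)
        (H.del k ((w ++ [false]).map eb) (rnd (w ++ [false]))) := by
      exact hdel pk (w.map eb) _ k _ hk (by rw [List.map_append]; exact ⟨_, rfl⟩)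
    have hkR : H.validKey pk ((w ++ [true]).map eb)
        (H.del k ((w ++ [true]).map eb) (rnd (w ++ [true]))) := by
      exact hdel pk (w.map eb) _ k _ hk (by rw [List.map_append]; exact ⟨_, rfl⟩)
    have hs' : ∀ p ∈ ((w ++ [true],
        H.del k ((w ++ [true]).map eb) (rnd (w ++ [true]))) :: s),
        H.validKey pk (p.1.map eb) p.2 := by
      intro p hp
      rcases List.mem_cons.mp hp with h | h
      · subst h; exact hkR
      · exact hs p h
    obtain ⟨h1, h2, h3, h4⟩ := ih (w ++ [false])
      (H.del k ((w ++ [false]).map eb) (rnd (w ++ [false])))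
      ((w ++ [true], H.del k ((w ++ [true]).map eb) (rnd (w ++ [true]))) :: s)
      (by simp; omega) (by simp; omega) hkL hs'
    have hrep : List.replicate (d - w.length) (false : Bool) =
        false :: List.replicate (d - (w ++ [false]).length) false := by
      have : d - w.length = (d - (w ++ [false]).length) + 1 := by simp; omega
      rw [this, List.replicate_succ]
    have hwrep : w ++ List.replicate (d - w.length) (false : Bool) =
        (w ++ [false]) ++ List.replicate (d - (w ++ [false]).length) false := by
      rw [hrep, ← List.append_cons]
    refine ⟨?_, ?_, ?_, h4⟩
    · rw [h1, hwrep]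
    · exact h2
    · rw [h3, hrep]
      show _ = goS w (false :: _) ++ _
      rw [goS]
      simp [List.append_assoc]

lemma dfRunK_spec (skε : SK)
    (hmaster : H.validKey pk [] skε)
    (hdel : ∀ (p : PK) (id id' : List Id) (sk : SK) (r : R),
      H.validKey p id sk → id <+: id' → H.validKey p id' (H.del sk id' r)) :
    ∀ i : ℕ, i < 2 ^ d →
    (dfRunK H eb rnd d skε (i+1)).1.1 = leafEnc d i ∧
    H.validKey pk ((leafEnc d i).map eb) (dfRunK H eb rnd d skε (i+1)).1.2 ∧
    ((dfRunK H eb rnd d skε (i+1)).2).map Prod.fst = goS [] (leafEnc d i) ∧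
    ∀ p ∈ (dfRunK H eb rnd d skε (i+1)).2, H.validKey pk (p.1.map eb) p.2 := by
  intro i
  induction i with
  | zero =>
    intro _
    have hrun : dfRunK H eb rnd d skε 1 = dfDescendK H eb rnd d [] skε [] := by
      rfl
    obtain ⟨h1, h2, h3, h4⟩ := dfDescendK_spec H eb rnd d pk hdel d [] skε []
      (by simp) (by simp) (by simpa using hmaster) (by simp)
    rw [hrun]
    have hl : ([] : List Bool) ++ List.replicate (d - ([] : List Bool).length) false
        = leafEnc d 0 := by simp [leafEnc_zero]
    refine ⟨by rw [h1, hl], ?_, ?_, h4⟩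
    · rw [← hl, ← h1]; exact h2
    · rw [h3]
      simp only [List.map_nil, List.append_nil]
      rw [← hl]; simp [leafEnc_zero]
  | succ i ih =>
    intro hi
    obtain ⟨ih1, ih2, ih3, ih4⟩ := ih (by omega)
    obtain ⟨p, j, hEi, hEi1⟩ := leafEnc_inc d i hi
    have hlenp : p.length + 1 + j = d := by
      have := leafEnc_length d i
      rw [hEi] at this; simp at this; omega
    -- the stack after step i+1 starts with the node p ++ [true]
    have hstack : ((dfRunK H eb rnd d skε (i+1)).2).map Prod.fst =
        (p ++ [true]) :: goS [] p := by
      rw [ih3, hEi]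
      rw [show p ++ false :: List.replicate j true
            = p ++ (false :: List.replicate j true) by rfl,
        goS_append]
      simp [goS, goS_replicate_true]
    rcases hS : (dfRunK H eb rnd d skε (i+1)).2 with _ | ⟨⟨w0, k0⟩, rest⟩
    · rw [hS] at hstack; simp at hstack
    · rw [hS] at hstack
      simp only [List.map_cons] at hstack
      have hw0 : w0 = p ++ [true] := by
        have := congrArg List.head? hstack; simpa using this
      have hrest : rest.map Prod.fst = goS [] p := by
        have := congrArg List.tail hstack; simpa using this
      have hk0 : H.validKey pk (w0.map eb) k0 := by
        exact ih4 (w0, k0) (by rw [hS]; exact List.mem_cons_self)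
      have hrestv : ∀ q ∈ rest, H.validKey pk (q.1.map eb) q.2 := by
        intro q hq; exact ih4 q (by rw [hS]; exact List.mem_cons_of_mem _ hq)
      have hrun : dfRunK H eb rnd d skε (i+2) = dfDescendK H eb rnd d w0 k0 rest := by
        show dfEvalK H eb rnd d skε (dfRunK H eb rnd d skε (i+1)).2 = _
        rw [hS]; rfl
      have hw0len : w0.length = p.length + 1 := by rw [hw0]; simp
      obtain ⟨h1, h2, h3, h4⟩ := dfDescendK_spec H eb rnd d pk hdel j w0 k0 rest
        (by omega) (by omega) hk0 hrestv
      have hdj : d - w0.length = j := by omega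
      have hleaf : w0 ++ List.replicate (d - w0.length) false = leafEnc d (i+1) := by
        rw [hdj, hw0, hEi1, ← List.append_cons]
      have hgoal : goS [] (leafEnc d (i+1)) =
          goS w0 (List.replicate (d - w0.length) false) ++ goS [] p := by
        rw [hdj, hEi1, hw0]
        rw [show p ++ true :: List.replicate j false
              = p ++ (true :: List.replicate j false) by rfl, goS_append]
        simp [goS]
      rw [hrun]
      refine ⟨by rw [h1, hleaf], ?_, ?_, h4⟩
      · rw [← hleaf, ← h1]; exact h2
      · rw [h3, hrest, hgoal]

end Spec

/-- Correctness of the forward-secure TBIDS from a `(1 + d)`-level HIBS: if the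
HIBS is correct (valid keys sign verifying signatures, and delegation along
prefixes of honest keys yields honest keys), then for every epoch `i < 2^d`
obtained by `i + 1` successive DFEval invocations from the root key, every
identity `id` and every message `m`, the key delegated from the current leaf
key for the identity `(binid(i), id)` produces signatures that verify —
because the DFEval traversal yields at step `i` precisely a correctly delegated
HIBS key for `binid(i)`. -/


theorem fs_tbids_correct
    (H : HIBS PK SK Id M Sig R) (eb : Bool → Id) (idf : BId → Id)
    (rnd : List Bool → R) (d : ℕ) (pk : PK) (skε : SK)
    (hmaster : H.validKey pk [] skε)
    (hdel : ∀ (p : PK) (id id' : List Id) (sk : SK) (r : R),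
      H.validKey p id sk → id <+: id' → H.validKey p id' (H.del sk id' r))
    (hcorr : ∀ (p : PK) (id : List Id) (sk : SK) (m : M) (r : R),
      H.validKey p id sk → H.verify p id m (H.sign sk m r) = true)
    (i : ℕ) (hi : i < 2 ^ d) (id : BId) (m : M) (r r' : R) :
    H.verify pk ((leafEnc d i).map eb ++ [idf id]) m
      (H.sign
        (H.del ((dfRunK H eb rnd d skε (i + 1)).1.2)
          ((leafEnc d i).map eb ++ [idf id]) r)
        m r') = true := by
  obtain ⟨-, hvalid, -, -⟩ := dfRunK_spec H eb rnd d pk skε hmaster hdel i hi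
  exact hcorr pk _ _ m r' (hdel pk _ _ _ r hvalid ⟨[idf id], rfl⟩)
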